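/- Let τ > 0 and 0 < α < β. Then there exists a unique γ ∈ (0, β − α) such that β − γ = α e^{γτ} (e^{γτ} − 1)/(γτ). Moreover, the function γ ↦ α e^{γτ}(e^{γτ} − 1)/(γτ) + γ is strictly increasing on (0,∞), with limit α + γ → α as γ → 0+. -/

import Mathlib

open Real Set Filter Topology

lemma slope_mono : StrictMonoOn (fun x : ℝ => (exp x - 1) / x) (Ioi 0) := by
  intro x hx y hy hxy
  have := strictConvexOn_exp.secant_strict_mono (a := 0) (x := x) (y := y)
    (mem_univ 0) (mem_univ x) (mem_univ y) (ne_of_gt hx) (ne_of_gt hy) hxy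
  simpa using this

lemma slope_gt_one {x : ℝ} (hx : 0 < x) : 1 < (exp x - 1) / x := by
  rw [lt_div_iff₀ hx]
  have := add_one_lt_exp (ne_of_gt hx)
  linarith

lemma g_mono : StrictMonoOn (fun x : ℝ => exp x * ((exp x - 1) / x)) (Ioi 0) := by
  intro x hx y hy hxy
  have h1 : (0:ℝ) < (exp x - 1) / x := lt_trans one_pos (slope_gt_one hx)
  have h2 := slope_mono hx hy hxy
  have h3 : exp x < exp y := exp_lt_exp.2 hxy
  calc exp x * ((exp x - 1) / x) < exp y * ((exp x - 1) / x) :=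
        mul_lt_mul_of_pos_right h3 h1
    _ ≤ exp y * ((exp y - 1) / y) := by
        exact mul_le_mul_of_nonneg_left h2.le (exp_pos y).le

lemma g_gt_one {x : ℝ} (hx : 0 < x) : 1 < exp x * ((exp x - 1) / x) := by
  have h1 := slope_gt_one hx
  have h2 : 1 < exp x := by simpa using exp_lt_exp.2 hx
  nlinarith

lemma slope_tendsto : Tendsto (fun x : ℝ => (exp x - 1) / x) (𝓝[≠] 0) (𝓝 1) := by
  have := (hasDerivAt_exp 0)
  rw [hasDerivAt_iff_tendsto_slope] at this
  simp only [exp_zero] at this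
  refine this.congr' ?_
  filter_upwards [self_mem_nhdsWithin] with x hx
  simp [slope_def_field, div_eq_div_iff]

lemma g_tendsto : Tendsto (fun x : ℝ => exp x * ((exp x - 1) / x)) (𝓝[≠] 0) (𝓝 1) := by
  have h1 : Tendsto (fun x : ℝ => exp x) (𝓝[≠] 0) (𝓝 1) := by
    have : Tendsto (fun x : ℝ => exp x) (𝓝 0) (𝓝 1) := by
      simpa using continuous_exp.tendsto 0
    exact this.mono_left nhdsWithin_le_nhds
  simpa using h1.mul slope_tendsto

theorem halanay_rate_exists_unique_and_monotone
    {τ α β : ℝ} (hτ : 0 < τ) (hα : 0 < α) (hαβ : α < β) :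
    (∃! γ : ℝ, γ ∈ Ioo 0 (β - α) ∧
      β - γ = α * exp (γ * τ) * ((exp (γ * τ) - 1) / (γ * τ))) ∧
    StrictMonoOn (fun γ : ℝ => α * exp (γ * τ) * ((exp (γ * τ) - 1) / (γ * τ)) + γ)
      (Ioi 0) ∧
    Tendsto (fun γ : ℝ => α * exp (γ * τ) * ((exp (γ * τ) - 1) / (γ * τ)) + γ)
      (nhdsWithin 0 (Ioi 0)) (nhds α) := by
  set f : ℝ → ℝ := fun γ => α * exp (γ * τ) * ((exp (γ * τ) - 1) / (γ * τ)) + γ with hf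
  have hmono : StrictMonoOn f (Ioi 0) := by
    intro x hx y hy hxy
    have hx' : x * τ ∈ Ioi (0:ℝ) := mul_pos hx hτ
    have hy' : y * τ ∈ Ioi (0:ℝ) := mul_pos hy hτ
    have := g_mono hx' hy' (by nlinarith [hx.trans hxy] : x * τ < y * τ)
    simp only [hf]
    have := mul_lt_mul_of_pos_left this hα
    rw [mul_assoc α, mul_assoc α]
    linarith
  have hmaps : Tendsto (fun γ : ℝ => γ * τ) (𝓝[>] 0) (𝓝[≠] 0) := by
    apply tendsto_nhdsWithin_of_tendsto_nhds_of_eventually_within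
    · have : Tendsto (fun γ : ℝ => γ * τ) (𝓝 0) (𝓝 (0 * τ)) := (tendsto_id.mul_const τ)
      simpa using this.mono_left nhdsWithin_le_nhds
    · filter_upwards [self_mem_nhdsWithin] with x hx
      exact ne_of_gt (mul_pos hx hτ)
  have htend : Tendsto f (𝓝[>] 0) (𝓝 α) := by
    have h1 : Tendsto (fun γ : ℝ => α * exp (γ * τ) * ((exp (γ * τ) - 1) / (γ * τ)))
        (𝓝[>] 0) (𝓝 α) := by
      have := (g_tendsto.comp hmaps).const_mul α
      simp only [Function.comp] at this
      simpa [mul_assoc] using this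
    have h2 : Tendsto (fun γ : ℝ => γ) (𝓝[>] (0:ℝ)) (𝓝 0) :=
      tendsto_id.mono_left nhdsWithin_le_nhds
    simpa using h1.add h2
  refine ⟨?_, hmono, htend⟩
  have hβα : 0 < β - α := by linarith
  -- f (β - α) > β
  have hfend : β < f (β - α) := by
    have := g_gt_one (mul_pos hβα hτ)
    have := mul_lt_mul_of_pos_left this hα
    simp only [hf]
    rw [mul_assoc α]
    linarith
  -- find a small point a with f a < β and 0 < a < β - α
  have hev : ∀ᶠ γ in 𝓝[>] (0:ℝ), f γ < β ∧ γ < β - α := by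
    have h1 : ∀ᶠ γ in 𝓝[>] (0:ℝ), f γ < β :=
      htend.eventually_lt_const hαβ
    have h2 : ∀ᶠ γ in 𝓝[>] (0:ℝ), γ < β - α := by
      have : Ioo (0:ℝ) (β - α) ∈ 𝓝[>] (0:ℝ) := Ioo_mem_nhdsGT_of_mem ⟨le_refl 0, hβα⟩
      filter_upwards [this] with x hx using hx.2
    exact h1.and h2
  obtain ⟨a, ⟨hfa, haβ⟩, ha0⟩ := (hev.and self_mem_nhdsWithin).exists
  have ha0 : (0:ℝ) < a := ha0
  -- continuity on Icc a (β - α)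
  have hcont : ContinuousOn f (Icc a (β - α)) := by
    apply ContinuousOn.add ?_ continuousOn_id
    apply ContinuousOn.mul
    · exact (continuous_const.mul (continuous_exp.comp (continuous_id.mul continuous_const))).continuousOn
    · apply ContinuousOn.div
      · exact ((continuous_exp.comp (continuous_id.mul continuous_const)).sub
          continuous_const).continuousOn
      · exact (continuous_id.mul continuous_const).continuousOn
      · intro x hx
        exact ne_of_gt (mul_pos (lt_of_lt_of_le ha0 hx.1) hτ)
  have hsub : β ∈ Icc (f a) (f (β - α)) := ⟨hfa.le, hfend.le⟩
  obtain ⟨c, hc, hfc⟩ := intermediate_value_Icc haβ.le hcont hsub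
  have hc0 : 0 < c := lt_of_lt_of_le ha0 hc.1
  have hcβ : c < β - α := by
    rcases lt_or_eq_of_le hc.2 with h | h
    · exact h
    · exact absurd (h ▸ hfc) (ne_of_lt hfend).symm
  refine ⟨c, ⟨⟨hc0, hcβ⟩, by simp only [hf] at hfc; linarith⟩, ?_⟩
  rintro y ⟨⟨hy0, hyβ⟩, hy⟩
  have hfy : f y = β := by simp only [hf]; linarith
  exact hmono.injOn hy0 hc0 (by rw [hfy, hfc])
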